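/- Fix an integer k ≥ 2, an integer n ≥ 2, a real α > 0 such that d = α log₂ n is a positive integer, let p = (1 − 2^{−2k/α})^{1/k}, and assume p ≤ 1/2. Let (U_1,…,U_k) be sampled from the planted distribution with fixed locations s = (s_1,…,s_k) ∈ {1,…,n}^k, and let R ⊆ {1,…,k} × {1,…,n} be a fixed set of positions; form a new instance by replacing, for each (ℓ,i) ∈ R, the vector U_{ℓ,i} with a freshly sampled vector of i.i.d. p-biased entries (independently of everything else). If R contains at least one planted position (ℓ, s_ℓ), then the resulting instance is distributed as k·n vectors whose k·n·d entries are all i.i.d. p-biased (the model distribution); if R contains no planted position, the resulting instance is distributed according to the planted distribution with locations s. -/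

import Mathlib

open Finset

/-- The weight of a `p`-biased bit: `1` has probability `p`, `0` has probability `1 - p`. -/
noncomputable def bern (p : ℝ) (b : Bool) : ℝ := if b then p else 1 - p

/-- The number of ones in a bit string. -/
def ones {k : ℕ} (x : Fin k → Bool) : ℕ := (Finset.univ.filter fun i => x i = true).card

/-- The planted per-coordinate distribution
`P_k(x) = p^m (1-p)^{k-m} - (-1)^{k-m} p^k`, where `m` is the number of ones in `x`. -/
noncomputable def Pk (k : ℕ) (p : ℝ) (x : Fin k → Bool) : ℝ :=
  p ^ ones x * (1 - p) ^ (k - ones x) - (-1 : ℝ) ^ (k - ones x) * p ^ k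

/-- The probability of an instance under the model distribution: all `k·n·d` entries are
i.i.d. `p`-biased. -/
noncomputable def modelWeight (k n d : ℕ) (p : ℝ)
    (U : Fin k → Fin n → Fin d → Bool) : ℝ :=
  ∏ l : Fin k, ∏ i : Fin n, ∏ j : Fin d, bern p (U l i j)

/-- The probability of an instance `U` under the planted distribution with locations `s`:
the `d` coordinates of the tuple of planted vectors `(U_{1,s_1},…,U_{k,s_k})` are i.i.d.
according to `P_k`, and all entries of all other vectors are i.i.d. `p`-biased. -/
noncomputable def plantedWeight (k n d : ℕ) (p : ℝ) (s : Fin k → Fin n)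
    (U : Fin k → Fin n → Fin d → Bool) : ℝ :=
  (∏ j : Fin d, Pk k p (fun l => U l (s l) j)) *
    ∏ l : Fin k, ∏ i ∈ Finset.univ.filter (fun i : Fin n => i ≠ s l),
      ∏ j : Fin d, bern p (U l i j)

/-! ### Auxiliary definitions and lemmas -/

/-- The weight of a `p`-biased vector of `d` bits. -/
noncomputable def wv (d : ℕ) (p : ℝ) (v : Fin d → Bool) : ℝ := ∏ j, bern p (v j)

lemma sum_bern (p : ℝ) : ∑ b : Bool, bern p b = 1 := by simp [bern]

lemma sum_wv (d : ℕ) (p : ℝ) : ∑ v : Fin d → Bool, wv d p v = 1 := by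
  have h := Fintype.prod_sum (fun (_ : Fin d) (b : Bool) => bern p b)
  simp only [sum_bern, prod_const_one] at h
  simp only [wv]
  exact h.symm

lemma ind_eq_prod {ι : Type*} [Fintype ι] {X : Type*} [DecidableEq X] (f g : ι → X) :
    (if f = g then (1:ℝ) else 0) = ∏ i, if f i = g i then (1:ℝ) else 0 := by
  by_cases h : f = g
  · simp [h]
  · rw [if_neg h]
    obtain ⟨i, hi⟩ := Function.ne_iff.mp h
    exact (Finset.prod_eq_zero (mem_univ i) (by simp [hi])).symm

lemma ones_le {k : ℕ} (x : Fin k → Bool) : ones x ≤ k := by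
  simpa [ones] using (Finset.card_filter_le univ fun i => x i = true)

lemma prod_bern {k : ℕ} (p : ℝ) (x : Fin k → Bool) :
    ∏ l : Fin k, bern p (x l) = p ^ ones x * (1 - p) ^ (k - ones x) := by
  have h1 : ∏ l : Fin k, bern p (x l)
      = (∏ l ∈ univ.filter (fun l => x l = true), p) *
        ∏ l ∈ univ.filter (fun l => ¬ x l = true), (1 - p) := by
    rw [← Finset.prod_ite]
    refine Finset.prod_congr rfl fun l _ => ?_
    by_cases h : x l <;> simp [bern, h]
  have h2 : (univ.filter (fun l => ¬ x l = true)).card = k - ones x := by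
    have := Finset.card_filter_add_card_filter_not (s := (univ : Finset (Fin k)))
      (p := fun l => x l = true)
    simp only [Finset.card_univ, Fintype.card_fin] at this
    have hle := ones_le x
    unfold ones at *
    omega
  rw [h1, Finset.prod_const, Finset.prod_const, h2]
  rfl

lemma Pk_eq {k : ℕ} (p : ℝ) (x : Fin k → Bool) :
    Pk k p x = (∏ l : Fin k, bern p (x l)) - (-1 : ℝ) ^ (k - ones x) * p ^ k := by
  rw [Pk, prod_bern]

lemma ones_update_true {k : ℕ} (x : Fin k → Bool) (l0 : Fin k) :
    ones (Function.update x l0 true) = ones (Function.update x l0 false) + 1 := by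
  unfold ones
  have h : (univ.filter fun i => Function.update x l0 true i = true)
      = insert l0 (univ.filter fun i => Function.update x l0 false i = true) := by
    ext i
    by_cases h : i = l0 <;> simp [Function.update_apply, h]
  rw [h, Finset.card_insert_of_notMem (by simp [Function.update_apply])]

lemma ones_update_false_lt {k : ℕ} (hk : 0 < k) (x : Fin k → Bool) (l0 : Fin k) :
    ones (Function.update x l0 false) < k := by
  unfold ones
  have h : (univ.filter fun i => Function.update x l0 false i = true) ⊆ univ.erase l0 := by
    intro i hi
    simp only [Finset.mem_filter, Function.update_apply] at hi
    rcases hi with ⟨-, hi⟩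
    by_cases hil : i = l0
    · simp [hil] at hi
    · simp [hil]
  calc (univ.filter fun i => Function.update x l0 false i = true).card
      ≤ (univ.erase l0).card := Finset.card_le_card h
    _ < k := by
        rw [Finset.card_erase_of_mem (mem_univ _)]
        simp only [Finset.card_univ, Fintype.card_fin]
        omega

/-- Marginalizing one coordinate of `Pk` gives independent `p`-biased bits on the rest. -/
lemma Pk_marg {k : ℕ} (hk : 0 < k) (p : ℝ) (l0 : Fin k) (x : Fin k → Bool) :
    ∑ b : Bool, Pk k p (Function.update x l0 b) = ∏ l ∈ univ.erase l0, bern p (x l) := by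
  have hprod : ∀ b : Bool, (∏ l : Fin k, bern p (Function.update x l0 b l))
      = bern p b * ∏ l ∈ univ.erase l0, bern p (x l) := by
    intro b
    have hfun : (fun l => bern p (Function.update x l0 b l))
        = Function.update (fun l => bern p (x l)) l0 (bern p b) := by
      funext l
      by_cases h : l = l0 <;> simp [Function.update_apply, h]
    rw [show (∏ l : Fin k, bern p (Function.update x l0 b l))
        = ∏ l : Fin k, Function.update (fun l => bern p (x l)) l0 (bern p b) l from
        Finset.prod_congr rfl fun l _ => congrFun hfun l]
    rw [Finset.prod_update_of_mem (Finset.mem_univ l0)]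
    congr 1
    exact Finset.prod_congr (by ext; simp [Finset.mem_erase]) fun _ _ => rfl
  simp only [Pk_eq, hprod]
  rw [Finset.sum_sub_distrib, ← Finset.sum_mul, sum_bern, one_mul]
  have hz : ∑ b : Bool, (-1 : ℝ) ^ (k - ones (Function.update x l0 b)) * p ^ k = 0 := by
    rw [Fintype.sum_bool, ones_update_true]
    have hlt := ones_update_false_lt hk x l0
    set m := ones (Function.update x l0 false)
    have h1 : k - m = (k - (m + 1)) + 1 := by omega
    rw [h1, pow_succ]
    ring
  rw [hz, sub_zero]

lemma sum_wv_ind_pos (d : ℕ) (p : ℝ) (c : Prop) [Decidable c] (u : Fin d → Bool) :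
    (∑ v : Fin d → Bool, wv d p v * (if c then (if v = u then (1:ℝ) else 0) else 1))
      = if c then wv d p u else 1 := by
  by_cases hc : c
  · simp only [if_pos hc, mul_ite, mul_one, mul_zero, Finset.sum_ite_eq', mem_univ, if_true]
  · simp only [if_neg hc, mul_one, sum_wv]

lemma sum_wv_ind_neg (d : ℕ) (p : ℝ) (c : Prop) [Decidable c] (u : Fin d → Bool) :
    (∑ v : Fin d → Bool, wv d p v * (if c then 1 else (if v = u then (1:ℝ) else 0)))
      = if c then 1 else wv d p u := by
  by_cases hc : c
  · simp only [if_pos hc, mul_one, sum_wv]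
  · simp only [if_neg hc, mul_ite, mul_one, mul_zero, Finset.sum_ite_eq', mem_univ, if_true]

/-- Splitting an instance into its planted vectors and the rest. -/
def splitU {k n : ℕ} {X : Type*} (s : Fin k → Fin n) :
    (Fin k → Fin n → X) ≃ ((Fin k → X) × ∀ l : Fin k, {i : Fin n // i ≠ s l} → X) where
  toFun U := (fun l => U l (s l), fun l i => U l i.1)
  invFun gh l i := if h : i = s l then gh.1 l else gh.2 l ⟨i, h⟩
  left_inv U := by
    funext l i
    dsimp only
    split_ifs with h
    · rw [h]
    · rfl
  right_inv gh := by
    rcases gh with ⟨g, h⟩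
    dsimp only
    congr 1
    · funext l; rw [dif_pos rfl]
    · funext l i; rw [dif_neg i.2]

set_option maxHeartbeats 2000000 in
/-- Sample `U` from the planted distribution with locations `s` and,
independently, fresh i.i.d. `p`-biased vectors `F`; replace the vectors of `U` at the
positions of `R` by the corresponding fresh vectors. If `R` contains a planted position
`(ℓ, s_ℓ)`, the resulting instance is distributed according to the model distribution;
if `R` contains no planted position, it is distributed according to the planted
distribution with locations `s`. -/
theorem stmt13 (k n : ℕ) (hk : 2 ≤ k) (hn : 2 ≤ n) (α : ℝ) (hα : 0 < α)
    (d : ℕ) (hd : 0 < d) (hdα : (d : ℝ) = α * Real.logb 2 n)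
    (p : ℝ) (hp : p = (1 - (2 : ℝ) ^ (-(2 * (k : ℝ)) / α)) ^ ((1 : ℝ) / k))
    (hp2 : p ≤ 1 / 2) (s : Fin k → Fin n) (R : Finset (Fin k × Fin n)) :
    ((∃ l : Fin k, (l, s l) ∈ R) →
      ∀ V : Fin k → Fin n → Fin d → Bool,
        (∑ U : Fin k → Fin n → Fin d → Bool, ∑ F : Fin k → Fin n → Fin d → Bool,
            plantedWeight k n d p s U * modelWeight k n d p F *
              (if (fun l i => if (l, i) ∈ R then F l i else U l i) = V then 1 else 0))
          = modelWeight k n d p V) ∧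
    ((∀ l : Fin k, (l, s l) ∉ R) →
      ∀ V : Fin k → Fin n → Fin d → Bool,
        (∑ U : Fin k → Fin n → Fin d → Bool, ∑ F : Fin k → Fin n → Fin d → Bool,
            plantedWeight k n d p s U * modelWeight k n d p F *
              (if (fun l i => if (l, i) ∈ R then F l i else U l i) = V then 1 else 0))
          = plantedWeight k n d p s V) := by
  have hk0 : 0 < k := by omega
  -- the key factorization of the double sum, valid in both cases
  have key : ∀ V : Fin k → Fin n → Fin d → Bool,
      (∑ U : Fin k → Fin n → Fin d → Bool, ∑ F : Fin k → Fin n → Fin d → Bool,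
          plantedWeight k n d p s U * modelWeight k n d p F *
            (if (fun l i => if (l, i) ∈ R then F l i else U l i) = V then 1 else 0))
        = (∑ g : Fin k → Fin d → Bool,
            (∏ j : Fin d, Pk k p (fun l => g l j)) *
              ∏ l : Fin k, (if (l, s l) ∈ R then (1:ℝ)
                else if g l = V l (s l) then 1 else 0)) *
          ((∏ l : Fin k, ∏ i ∈ univ.filter (fun i : Fin n => i ≠ s l),
              (if (l, i) ∈ R then (1:ℝ) else wv d p (V l i))) *
            ∏ l : Fin k, ∏ i : Fin n, (if (l, i) ∈ R then wv d p (V l i) else 1)) := by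
    intro V
    -- Step 1: split the indicator and factor the summand into a U-part and an F-part
    have hsummand : ∀ U F : Fin k → Fin n → Fin d → Bool,
        plantedWeight k n d p s U * modelWeight k n d p F *
          (if (fun l i => if (l, i) ∈ R then F l i else U l i) = V then (1:ℝ) else 0)
        = (plantedWeight k n d p s U *
            ∏ l : Fin k, ∏ i : Fin n,
              (if (l, i) ∈ R then (1:ℝ) else if U l i = V l i then 1 else 0)) *
          (modelWeight k n d p F *
            ∏ l : Fin k, ∏ i : Fin n,
              (if (l, i) ∈ R then (if F l i = V l i then (1:ℝ) else 0) else 1)) := by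
      intro U F
      have h1 : (if (fun l i => if (l, i) ∈ R then F l i else U l i) = V then (1:ℝ) else 0)
          = ∏ l : Fin k, ∏ i : Fin n,
              ((if (l, i) ∈ R then (if F l i = V l i then (1:ℝ) else 0) else 1) *
               (if (l, i) ∈ R then (1:ℝ) else if U l i = V l i then 1 else 0)) := by
        rw [ind_eq_prod]
        refine Finset.prod_congr rfl fun l _ => ?_
        rw [ind_eq_prod]
        refine Finset.prod_congr rfl fun i _ => ?_
        by_cases h : (l, i) ∈ R <;> simp [h]
      rw [h1]
      simp only [Finset.prod_mul_distrib]
      ring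
    simp only [hsummand]
    rw [← Finset.sum_mul_sum]
    -- Step 2: compute the F-part
    have hSF : (∑ F : Fin k → Fin n → Fin d → Bool,
        modelWeight k n d p F *
          ∏ l : Fin k, ∏ i : Fin n,
            (if (l, i) ∈ R then (if F l i = V l i then (1:ℝ) else 0) else 1))
        = ∏ l : Fin k, ∏ i : Fin n, (if (l, i) ∈ R then wv d p (V l i) else 1) := by
      have h2 : ∀ F : Fin k → Fin n → Fin d → Bool,
          modelWeight k n d p F *
            ∏ l : Fin k, ∏ i : Fin n,
              (if (l, i) ∈ R then (if F l i = V l i then (1:ℝ) else 0) else 1)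
          = ∏ l : Fin k, ∏ i : Fin n,
              (wv d p (F l i) * (if (l, i) ∈ R then (if F l i = V l i then (1:ℝ) else 0) else 1)) := by
        intro F
        rw [modelWeight]
        simp only [Finset.prod_mul_distrib]
        rfl
      simp only [h2]
      rw [(Fintype.prod_sum (fun (l : Fin k) (f : Fin n → Fin d → Bool) =>
          ∏ i : Fin n, (wv d p (f i) *
            (if (l, i) ∈ R then (if f i = V l i then (1:ℝ) else 0) else 1)))).symm]
      refine Finset.prod_congr rfl fun l _ => ?_
      rw [(Fintype.prod_sum (fun (i : Fin n) (v : Fin d → Bool) =>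
          wv d p v * (if (l, i) ∈ R then (if v = V l i then (1:ℝ) else 0) else 1))).symm]
      exact Finset.prod_congr rfl fun i _ => sum_wv_ind_pos d p _ _
    rw [hSF]
    have hSU : (∑ U : Fin k → Fin n → Fin d → Bool,
        plantedWeight k n d p s U *
          ∏ l : Fin k, ∏ i : Fin n,
            (if (l, i) ∈ R then (1:ℝ) else if U l i = V l i then 1 else 0))
        = (∑ g : Fin k → Fin d → Bool,
            (∏ j : Fin d, Pk k p (fun l => g l j)) *
              ∏ l : Fin k, (if (l, s l) ∈ R then (1:ℝ)
                else if g l = V l (s l) then 1 else 0)) *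
          ∏ l : Fin k, ∏ i ∈ univ.filter (fun i : Fin n => i ≠ s l),
            (if (l, i) ∈ R then (1:ℝ) else wv d p (V l i)) := by
      have hpoint : ∀ U : Fin k → Fin n → Fin d → Bool,
          plantedWeight k n d p s U *
            ∏ l : Fin k, ∏ i : Fin n,
              (if (l, i) ∈ R then (1:ℝ) else if U l i = V l i then 1 else 0)
          = ((∏ j : Fin d, Pk k p (fun l => U l (s l) j)) *
              ∏ l : Fin k, (if (l, s l) ∈ R then (1:ℝ)
                else if U l (s l) = V l (s l) then 1 else 0)) *
            ∏ l : Fin k, ∏ i : {i : Fin n // i ≠ s l},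
              (wv d p (U l i.1) *
                (if (l, i.1) ∈ R then (1:ℝ) else if U l i.1 = V l i.1 then 1 else 0)) := by
        intro U
        have hsplit : ∀ (c : Fin n → ℝ) (l : Fin k), (∏ i : Fin n, c i)
            = c (s l) * ∏ i : {i : Fin n // i ≠ s l}, c i.1 := by
          intro c l
          rw [← Finset.prod_subtype (univ.erase (s l))
            (fun i => by simp [Finset.mem_erase]) (fun i => c i)]
          exact (Finset.mul_prod_erase univ c (mem_univ (s l))).symm
        have hplant : plantedWeight k n d p s U
            = (∏ j : Fin d, Pk k p (fun l => U l (s l) j)) *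
              ∏ l : Fin k, ∏ i : {i : Fin n // i ≠ s l}, wv d p (U l i.1) := by
          rw [plantedWeight]
          congr 1
          refine Finset.prod_congr rfl fun l _ => ?_
          rw [Finset.filter_ne', ← Finset.prod_subtype (univ.erase (s l))
            (fun i => by simp [Finset.mem_erase]) (fun i => wv d p (U l i))]
          exact Finset.prod_congr rfl fun i _ => rfl
        have hind : (∏ l : Fin k, ∏ i : Fin n,
              (if (l, i) ∈ R then (1:ℝ) else if U l i = V l i then 1 else 0))
            = (∏ l : Fin k, (if (l, s l) ∈ R then (1:ℝ)
                else if U l (s l) = V l (s l) then 1 else 0)) *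
              ∏ l : Fin k, ∏ i : {i : Fin n // i ≠ s l},
                (if (l, i.1) ∈ R then (1:ℝ) else if U l i.1 = V l i.1 then 1 else 0) := by
          rw [← Finset.prod_mul_distrib]
          exact Finset.prod_congr rfl fun l _ => hsplit _ l
        have hmerge : (∏ l : Fin k, ∏ i : {i : Fin n // i ≠ s l}, wv d p (U l i.1)) *
              (∏ l : Fin k, ∏ i : {i : Fin n // i ≠ s l},
                (if (l, i.1) ∈ R then (1:ℝ) else if U l i.1 = V l i.1 then 1 else 0))
            = ∏ l : Fin k, ∏ i : {i : Fin n // i ≠ s l},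
              (wv d p (U l i.1) *
                (if (l, i.1) ∈ R then (1:ℝ) else if U l i.1 = V l i.1 then 1 else 0)) := by
          rw [← Finset.prod_mul_distrib]
          exact Finset.prod_congr rfl fun l _ => (Finset.prod_mul_distrib).symm
        rw [hplant, hind, ← hmerge]
        ring
      rw [Fintype.sum_equiv (splitU s)
        (fun U => plantedWeight k n d p s U *
          ∏ l : Fin k, ∏ i : Fin n,
            (if (l, i) ∈ R then (1:ℝ) else if U l i = V l i then 1 else 0))
        (fun gh => ((∏ j : Fin d, Pk k p (fun l => gh.1 l j)) *
            ∏ l : Fin k, (if (l, s l) ∈ R then (1:ℝ)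
              else if gh.1 l = V l (s l) then 1 else 0)) *
          ∏ l : Fin k, ∏ i : {i : Fin n // i ≠ s l},
            (wv d p (gh.2 l i) *
              (if (l, i.1) ∈ R then (1:ℝ) else if gh.2 l i = V l i.1 then 1 else 0)))
        (fun U => hpoint U)]
      rw [Fintype.sum_prod_type]
      dsimp only
      dsimp +instances only
      rw [← Finset.sum_mul_sum]
      congr 1
      rw [(Fintype.prod_sum (fun (l : Fin k) (f : {i : Fin n // i ≠ s l} → Fin d → Bool) =>
          ∏ i : {i : Fin n // i ≠ s l}, (wv d p (f i) *
            (if (l, i.1) ∈ R then (1:ℝ) else if f i = V l i.1 then 1 else 0)))).symm]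
      refine Finset.prod_congr rfl fun l _ => ?_
      rw [(Fintype.prod_sum (fun (i : {i : Fin n // i ≠ s l}) (v : Fin d → Bool) =>
          wv d p v * (if (l, i.1) ∈ R then (1:ℝ) else if v = V l i.1 then 1 else 0))).symm]
      rw [Finset.prod_congr rfl fun (i : {i : Fin n // i ≠ s l}) _ => sum_wv_ind_neg d p _ _]
      rw [← Finset.prod_subtype (univ.filter (fun i : Fin n => i ≠ s l))
        (fun i => by simp) (fun i : Fin n => if (l, i) ∈ R then (1:ℝ) else wv d p (V l i))]
    rw [hSU]
    ring
  constructor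
  · rintro ⟨l0, hl0⟩ V
    rw [key V]
    have hA : (∑ g : Fin k → Fin d → Bool,
        (∏ j : Fin d, Pk k p (fun l => g l j)) *
          ∏ l : Fin k, (if (l, s l) ∈ R then (1:ℝ) else if g l = V l (s l) then 1 else 0))
        = ∏ l : Fin k, (if (l, s l) ∈ R then (1:ℝ) else wv d p (V l (s l))) := by
      have hpt : ∀ g : Fin k → Fin d → Bool,
          (∏ j : Fin d, Pk k p (fun l => g l j)) *
            ∏ l : Fin k, (if (l, s l) ∈ R then (1:ℝ) else if g l = V l (s l) then 1 else 0)
          = (∏ j : Fin d, Pk k p (fun l =>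
              if h : l = l0 then g l0 j else g l j)) *
            ∏ l' : {l : Fin k // l ≠ l0},
              (if (l'.1, s l'.1) ∈ R then (1:ℝ)
                else if g l'.1 = V l'.1 (s l'.1) then 1 else 0) := by
        intro g
        congr 1
        · refine Finset.prod_congr rfl fun j _ => ?_
          congr 1
          funext l
          by_cases h : l = l0
          · rw [dif_pos h, h]
          · rw [dif_neg h]
        · rw [← Finset.prod_subtype (univ.erase l0)
            (fun l => by simp [Finset.mem_erase])
            (fun l : Fin k => if (l, s l) ∈ R then (1:ℝ)
              else if g l = V l (s l) then 1 else 0)]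
          rw [← Finset.mul_prod_erase univ _ (mem_univ l0), if_pos hl0, one_mul]
      rw [Finset.sum_congr rfl fun g _ => hpt g]
      rw [Fintype.sum_equiv ((Equiv.funSplitAt l0 (Fin d → Bool)))
        (fun g : Fin k → Fin d → Bool =>
          (∏ j : Fin d, Pk k p (fun l => if h : l = l0 then g l0 j else g l j)) *
            ∏ l' : {l : Fin k // l ≠ l0},
              (if (l'.1, s l'.1) ∈ R then (1:ℝ)
                else if g l'.1 = V l'.1 (s l'.1) then 1 else 0))
        (fun vg : (Fin d → Bool) × ({l : Fin k // l ≠ l0} → Fin d → Bool) =>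
          (∏ j : Fin d, Pk k p (fun l => if h : l = l0 then vg.1 j else vg.2 ⟨l, h⟩ j)) *
            ∏ l' : {l : Fin k // l ≠ l0},
              (if (l'.1, s l'.1) ∈ R then (1:ℝ)
                else if vg.2 l' = V l'.1 (s l'.1) then 1 else 0))
        (fun g => by rfl)]
      rw [Fintype.sum_prod_type]
      dsimp only
      rw [Finset.sum_comm]
      have hinner : ∀ g' : {l : Fin k // l ≠ l0} → Fin d → Bool,
          (∑ v : Fin d → Bool,
            (∏ j : Fin d, Pk k p (fun l => if h : l = l0 then v j else g' ⟨l, h⟩ j)) *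
              ∏ l' : {l : Fin k // l ≠ l0},
                (if (l'.1, s l'.1) ∈ R then (1:ℝ)
                  else if g' l' = V l'.1 (s l'.1) then 1 else 0))
          = ∏ l' : {l : Fin k // l ≠ l0},
              (wv d p (g' l') *
                (if (l'.1, s l'.1) ∈ R then (1:ℝ)
                  else if g' l' = V l'.1 (s l'.1) then 1 else 0)) := by
        intro g'
        rw [← Finset.sum_mul]
        rw [(Fintype.prod_sum (fun (j : Fin d) (b : Bool) =>
          Pk k p (fun l => if h : l = l0 then b else g' ⟨l, h⟩ j))).symm]
        have hb : ∀ j : Fin d, (∑ b : Bool,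
            Pk k p (fun l => if h : l = l0 then b else g' ⟨l, h⟩ j))
            = ∏ l' : {l : Fin k // l ≠ l0}, bern p (g' l' j) := by
          intro j
          have hupd : ∀ b : Bool, (fun l => if h : l = l0 then b else g' ⟨l, h⟩ j)
              = Function.update (fun l => if h : l = l0 then false else g' ⟨l, h⟩ j) l0 b := by
            intro b
            funext l
            by_cases h : l = l0
            · rw [dif_pos h, h, Function.update_self]
            · rw [dif_neg h, Function.update_of_ne h, dif_neg h]
          rw [Finset.sum_congr rfl fun b _ => congrArg (Pk k p) (hupd b)]
          rw [Pk_marg hk0]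
          rw [Finset.prod_subtype (p := fun l : Fin k => l ≠ l0) (univ.erase l0)
            (fun l => by simp [Finset.mem_erase])
            (fun l : Fin k => bern p (if h : l = l0 then false else g' ⟨l, h⟩ j))]
          exact Finset.prod_congr rfl fun l' _ => by rw [dif_neg l'.2]
        rw [Finset.prod_congr rfl fun j _ => hb j]
        rw [Finset.prod_comm]
        rw [← Finset.prod_mul_distrib]
        rfl
      rw [Finset.sum_congr rfl fun g' _ => hinner g']
      rw [(Fintype.prod_sum (fun (l' : {l : Fin k // l ≠ l0}) (x : Fin d → Bool) =>
        wv d p x * (if (l'.1, s l'.1) ∈ R then (1:ℝ)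
          else if x = V l'.1 (s l'.1) then 1 else 0))).symm]
      rw [Finset.prod_congr rfl fun (l' : {l : Fin k // l ≠ l0}) _ =>
        sum_wv_ind_neg d p _ _]
      rw [← Finset.prod_subtype (univ.erase l0)
        (fun l => by simp [Finset.mem_erase])
        (fun l : Fin k => if (l, s l) ∈ R then (1:ℝ) else wv d p (V l (s l)))]
      rw [← Finset.mul_prod_erase univ
        (fun l : Fin k => if (l, s l) ∈ R then (1:ℝ) else wv d p (V l (s l)))
        (mem_univ l0), if_pos hl0, one_mul]
    rw [hA, ← mul_assoc]
    have hc1 : (∏ l : Fin k, (if (l, s l) ∈ R then (1:ℝ) else wv d p (V l (s l)))) *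
        (∏ l : Fin k, ∏ i ∈ univ.filter (fun i : Fin n => i ≠ s l),
          (if (l, i) ∈ R then (1:ℝ) else wv d p (V l i)))
        = ∏ l : Fin k, ∏ i : Fin n, (if (l, i) ∈ R then (1:ℝ) else wv d p (V l i)) := by
      rw [← Finset.prod_mul_distrib]
      refine Finset.prod_congr rfl fun l _ => ?_
      rw [Finset.filter_ne']
      exact Finset.mul_prod_erase univ
        (fun i : Fin n => if (l, i) ∈ R then (1:ℝ) else wv d p (V l i)) (mem_univ (s l))
    rw [hc1, ← Finset.prod_mul_distrib]
    have hmul : ∀ l : Fin k,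
        (∏ i : Fin n, (if (l, i) ∈ R then (1:ℝ) else wv d p (V l i))) *
          (∏ i : Fin n, (if (l, i) ∈ R then wv d p (V l i) else 1))
        = ∏ i : Fin n, wv d p (V l i) := by
      intro l
      rw [← Finset.prod_mul_distrib]
      refine Finset.prod_congr rfl fun i _ => ?_
      by_cases h : (l, i) ∈ R <;> simp [h]
    rw [Finset.prod_congr rfl fun l (_ : l ∈ univ) => hmul l, modelWeight]
    exact Finset.prod_congr rfl fun l _ => Finset.prod_congr rfl fun i _ => rfl
  · intro hnR V
    rw [key V]
    have hA : (∑ g : Fin k → Fin d → Bool,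
        (∏ j : Fin d, Pk k p (fun l => g l j)) *
          ∏ l : Fin k, (if (l, s l) ∈ R then (1:ℝ) else if g l = V l (s l) then 1 else 0))
        = ∏ j : Fin d, Pk k p (fun l => V l (s l) j) := by
      have hpt : ∀ g : Fin k → Fin d → Bool,
          (∏ l : Fin k, (if (l, s l) ∈ R then (1:ℝ) else if g l = V l (s l) then 1 else 0))
          = if g = (fun l => V l (s l)) then (1:ℝ) else 0 := by
        intro g
        rw [ind_eq_prod g (fun l => V l (s l))]
        exact Finset.prod_congr rfl fun l _ => by rw [if_neg (hnR l)]
      simp only [hpt, mul_ite, mul_one, mul_zero]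
      rw [Finset.sum_ite_eq' univ (fun l => V l (s l))
        (fun g => ∏ j : Fin d, Pk k p (fun l => g l j))]
      rw [if_pos (mem_univ _)]
    rw [hA]
    have hQ2 : (∏ l : Fin k, ∏ i : Fin n, (if (l, i) ∈ R then wv d p (V l i) else 1))
        = ∏ l : Fin k, ∏ i ∈ univ.filter (fun i : Fin n => i ≠ s l),
            (if (l, i) ∈ R then wv d p (V l i) else 1) := by
      refine Finset.prod_congr rfl fun l _ => ?_
      rw [Finset.filter_ne']
      rw [← Finset.mul_prod_erase univ
        (fun i : Fin n => if (l, i) ∈ R then wv d p (V l i) else 1) (mem_univ (s l))]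
      rw [if_neg (hnR l), one_mul]
    rw [hQ2, ← Finset.prod_mul_distrib]
    have hmul2 : ∀ l : Fin k,
        (∏ i ∈ univ.filter (fun i : Fin n => i ≠ s l),
            (if (l, i) ∈ R then (1:ℝ) else wv d p (V l i))) *
          (∏ i ∈ univ.filter (fun i : Fin n => i ≠ s l),
            (if (l, i) ∈ R then wv d p (V l i) else 1))
        = ∏ i ∈ univ.filter (fun i : Fin n => i ≠ s l), wv d p (V l i) := by
      intro l
      rw [← Finset.prod_mul_distrib]
      refine Finset.prod_congr rfl fun i _ => ?_
      by_cases h : (l, i) ∈ R <;> simp [h]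
    rw [Finset.prod_congr rfl fun l (_ : l ∈ univ) => hmul2 l, plantedWeight]
    rfl
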